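/- For all n ≥ 0, the generating function for the major index over permutations of {1,…,n} avoiding the pattern 132 equals the generating function for the major index over permutations of {1,…,n} avoiding the pattern 231; that is, Σ_{σ ∈ Av_n(132)} q^{maj σ} = Σ_{σ ∈ Av_n(231)} q^{maj σ}. -/

import Mathlib

open scoped Classical

/-- `σ` contains the pattern `π`. -/
def permContains {n k : ℕ} (σ : Equiv.Perm (Fin n)) (π : Equiv.Perm (Fin k)) : Prop :=
  ∃ f : Fin k → Fin n, StrictMono f ∧ ∀ i j : Fin k, π i < π j ↔ σ (f i) < σ (f j)

/-- `σ` avoids the pattern `π`. -/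
def permAvoids {n k : ℕ} (σ : Equiv.Perm (Fin n)) (π : Equiv.Perm (Fin k)) : Prop :=
  ¬ permContains σ π

def p123 : Equiv.Perm (Fin 3) := 1
def p132 : Equiv.Perm (Fin 3) := Equiv.swap 1 2
def p213 : Equiv.Perm (Fin 3) := Equiv.swap 0 1
def p231 : Equiv.Perm (Fin 3) := finRotate 3
def p312 : Equiv.Perm (Fin 3) := (finRotate 3)⁻¹
def p321 : Equiv.Perm (Fin 3) := Equiv.swap 0 2

/-- Descent set of a permutation, as a set of (1-based) positions `i` with `a_i > a_{i+1}`. -/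
def desSet {n : ℕ} (σ : Equiv.Perm (Fin n)) : Finset ℕ :=
  (Finset.Ico 1 n).filter
    (fun i => ∀ h : i < n, σ ⟨i, h⟩ < σ ⟨i - 1, Nat.lt_of_le_of_lt (Nat.sub_le i 1) h⟩)

/-- Major index: sum of descent positions. -/
def majIdx {n : ℕ} (σ : Equiv.Perm (Fin n)) : ℕ := ∑ i ∈ desSet σ, i

/-- Number of descents. -/
def desNum {n : ℕ} (σ : Equiv.Perm (Fin n)) : ℕ := (desSet σ).card

/-- Number of inversions. -/
def invNum {n : ℕ} (σ : Equiv.Perm (Fin n)) : ℕ :=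
  ((Finset.univ : Finset (Fin n × Fin n)).filter (fun p => p.1 < p.2 ∧ σ p.2 < σ p.1)).card

namespace MajW

/-- major index starting at offset `i` (descent between positions j,j+1 contributes i+j+1). -/
def majAux : ℕ → List ℕ → ℕ
  | _, [] => 0
  | _, [_] => 0
  | i, (x :: y :: r) => (if y < x then i + 1 else 0) + majAux (i+1) (y :: r)

def majL (l : List ℕ) : ℕ := majAux 0 l

def desL : List ℕ → ℕ
  | [] => 0
  | [_] => 0
  | (x :: y :: r) => (if y < x then 1 else 0) + desL (y :: r)

lemma majAux_offset (l : List ℕ) : ∀ i, majAux i l = majAux 0 l + i * desL l := by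
  induction l with
  | nil => intro i; simp [majAux, desL]
  | cons x t ih =>
    intro i
    cases t with
    | nil => simp [majAux, desL]
    | cons y r =>
      rw [majAux, majAux, desL, ih (i+1), ih 1]
      by_cases h : y < x <;> simp [h] <;> ring_nf

lemma majAux_append (y : ℕ) (ys : List ℕ) :
    ∀ (xs : List ℕ) (i : ℕ),
      majAux i (xs ++ y :: ys) = majAux i (xs ++ [y]) + majAux (i + xs.length) (y :: ys) := by
  intro xs
  induction xs with
  | nil => intro i; simp [majAux]
  | cons x t ih =>
    intro i
    cases t with
    | nil =>
      cases ys with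
      | nil => simp [majAux, majL]
      | cons z zs => simp [majAux, ih]
    | cons z t' =>
      have h1 : (x :: z :: t') ++ y :: ys = x :: z :: (t' ++ y :: ys) := by simp
      have h2 : (x :: z :: t') ++ [y] = x :: z :: (t' ++ [y]) := by simp
      rw [h1, h2, majAux, majAux]
      have := ih (i+1)
      simp only [List.cons_append] at this ⊢
      rw [this]
      simp [List.length]
      ring_nf

lemma desL_append (y : ℕ) (ys : List ℕ) :
    ∀ (xs : List ℕ),
      desL (xs ++ y :: ys) = desL (xs ++ [y]) + desL (y :: ys) := by
  intro xs
  induction xs with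
  | nil => simp [desL]
  | cons x t ih =>
    cases t with
    | nil =>
      cases ys with
      | nil => simp [desL]
      | cons z zs => simp [desL]
    | cons z t' =>
      have h1 : (x :: z :: t') ++ y :: ys = x :: z :: (t' ++ y :: ys) := by simp
      have h2 : (x :: z :: t') ++ [y] = x :: z :: (t' ++ [y]) := by simp
      rw [h1, h2, desL, desL]
      simp only [List.cons_append] at ih ⊢
      rw [ih]
      ring

/-- appending a strictly larger element at the end creates no descent -/
lemma majAux_append_max (M : ℕ) :
    ∀ (a : List ℕ) (i : ℕ), (∀ x ∈ a, x < M) → majAux i (a ++ [M]) = majAux i a := by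
  intro a
  induction a with
  | nil => intro i _; simp [majAux]
  | cons x t ih =>
    intro i h
    cases t with
    | nil => simp [majAux, Nat.not_lt.2 (le_of_lt (h x (by simp)))]
    | cons y r =>
      have h1 : (x :: y :: r) ++ [M] = x :: y :: (r ++ [M]) := by simp
      rw [h1, majAux, majAux]
      have := ih (i+1) (fun z hz => h z (List.mem_cons_of_mem _ hz))
      simp only [List.cons_append] at this
      rw [this]

lemma desL_append_max (M : ℕ) :
    ∀ (a : List ℕ), (∀ x ∈ a, x < M) → desL (a ++ [M]) = desL a := by
  intro a
  induction a with
  | nil => intro _; simp [desL]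
  | cons x t ih =>
    intro h
    cases t with
    | nil => simp [desL, Nat.not_lt.2 (le_of_lt (h x (by simp)))]
    | cons y r =>
      have h1 : (x :: y :: r) ++ [M] = x :: y :: (r ++ [M]) := by simp
      rw [h1, desL, desL]
      have := ih (fun z hz => h z (List.mem_cons_of_mem _ hz))
      simp only [List.cons_append] at this
      rw [this]

/-- key decomposition of maj for `a ++ M :: b` where `M` dominates. -/
lemma majL_decomp (a b : List ℕ) (M : ℕ) (ha : ∀ x ∈ a, x < M) (hb : ∀ y ∈ b, y < M) :
    majL (a ++ M :: b) =
      majL a + (if b = [] then 0 else majL b + (a.length + 1) * (desL b + 1)) := by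
  rw [majL, majAux_append M b a 0, majAux_append_max M a 0 ha]
  cases b with
  | nil => simp [majAux, majL]
  | cons c r =>
    have hcM : c < M := hb c (by simp)
    rw [majAux]
    simp only [if_pos hcM]
    rw [majAux_offset (c :: r) (0 + a.length + 1)]
    simp [majL]
    ring

lemma desL_decomp (a b : List ℕ) (M : ℕ) (ha : ∀ x ∈ a, x < M) (hb : ∀ y ∈ b, y < M) :
    desL (a ++ M :: b) = desL a + (if b = [] then 0 else desL b + 1) := by
  rw [desL_append M b a, desL_append_max M a ha]
  cases b with
  | nil => simp [desL]
  | cons c r =>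
    have hcM : c < M := hb c (by simp)
    rw [desL]
    simp [if_pos hcM]
    ring


def has132 (l : List ℕ) : Prop :=
  ∃ i j k : ℕ, i < j ∧ j < k ∧ k < l.length ∧ l.getD i 0 < l.getD k 0 ∧ l.getD k 0 < l.getD j 0

def has231 (l : List ℕ) : Prop :=
  ∃ i j k : ℕ, i < j ∧ j < k ∧ k < l.length ∧ l.getD k 0 < l.getD i 0 ∧ l.getD i 0 < l.getD j 0

lemma len_split (a b : List ℕ) (M : ℕ) : (a ++ M :: b).length = a.length + 1 + b.length := by
  simp; omega

lemma mem_of_getD {l : List ℕ} {i : ℕ} (h : i < l.length) : l.getD i 0 ∈ l := by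
  rw [List.getD_eq_getElem l 0 h]; exact List.getElem_mem h

lemma getD_split_a {a : List ℕ} (b : List ℕ) (M : ℕ) {i : ℕ} (h : i < a.length) :
    (a ++ M :: b).getD i 0 = a.getD i 0 :=
  List.getD_append _ _ _ _ h

lemma getD_split_M (a b : List ℕ) (M : ℕ) :
    (a ++ M :: b).getD a.length 0 = M := by
  rw [List.getD_append_right _ _ _ _ (le_refl _), Nat.sub_self]
  rfl

lemma getD_split_b (a : List ℕ) {b : List ℕ} (M : ℕ) {i : ℕ} (h : a.length < i) :
    (a ++ M :: b).getD i 0 = b.getD (i - a.length - 1) 0 := by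
  rw [List.getD_append_right _ _ _ _ (le_of_lt h)]
  have : i - a.length = (i - a.length - 1) + 1 := by omega
  conv_lhs => rw [this]
  rw [List.getD_cons_succ]

lemma mem_a_of_lt {a : List ℕ} (b : List ℕ) (M : ℕ) {i : ℕ} (h : i < a.length) :
    (a ++ M :: b).getD i 0 ∈ a := by
  rw [getD_split_a b M h]; exact mem_of_getD h

lemma mem_b_of_gt {a b : List ℕ} {M : ℕ} {i : ℕ} (h1 : a.length < i)
    (h2 : i < (a ++ M :: b).length) :
    (a ++ M :: b).getD i 0 ∈ b := by
  rw [getD_split_b a M h1]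
  refine mem_of_getD ?_
  rw [len_split] at h2; omega

lemma has132_decomp (a b : List ℕ) (M : ℕ) (ha : ∀ x ∈ a, x < M) (hb : ∀ y ∈ b, y < M) :
    has132 (a ++ M :: b) ↔ has132 a ∨ has132 b ∨ ∃ x ∈ a, ∃ y ∈ b, x < y := by
  have hlen := len_split a b M
  constructor
  · rintro ⟨i, j, k, hij, hjk, hk, h1, h2⟩
    rcases lt_trichotomy k a.length with hka | hka | hka
    · left
      exact ⟨i, j, k, hij, hjk, hka,
        by rwa [getD_split_a b M (by omega), getD_split_a b M (by omega)] at h1,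
        by rwa [getD_split_a b M (by omega), getD_split_a b M (by omega)] at h2⟩
    · exfalso
      rw [hka, getD_split_M] at h2
      have := ha _ (mem_a_of_lt b M (show j < a.length by omega))
      omega
    · have hkmem := mem_b_of_gt hka hk
      rcases lt_trichotomy i a.length with hia | hia | hia
      · right; right
        exact ⟨_, mem_a_of_lt b M hia, _, hkmem, h1⟩
      · exfalso
        rw [hia, getD_split_M] at h1
        have := hb _ hkmem
        omega
      · right; left
        have hja : a.length < j := by omega
        refine ⟨i - a.length - 1, j - a.length - 1, k - a.length - 1,
          by omega, by omega, by omega, ?_, ?_⟩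
        · rwa [getD_split_b a M hia, getD_split_b a M hka] at h1
        · rwa [getD_split_b a M hka, getD_split_b a M hja] at h2
  · rintro (⟨i, j, k, hij, hjk, hk, h1, h2⟩ | ⟨i, j, k, hij, hjk, hk, h1, h2⟩ | ⟨x, hx, y, hy, hxy⟩)
    · exact ⟨i, j, k, hij, hjk, by omega,
        by rwa [getD_split_a b M (by omega), getD_split_a b M (by omega)],
        by rwa [getD_split_a b M (by omega), getD_split_a b M (by omega)]⟩
    · have e1 : ∀ m : ℕ, a.length + 1 + m - a.length - 1 = m := by omega
      refine ⟨a.length + 1 + i, a.length + 1 + j, a.length + 1 + k, by omega, by omega, by omega, ?_, ?_⟩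
      · rw [getD_split_b a M (by omega), getD_split_b a M (by omega), e1, e1]; exact h1
      · rw [getD_split_b a M (by omega), getD_split_b a M (by omega), e1, e1]; exact h2
    · obtain ⟨ix, hix, hgx⟩ := List.mem_iff_getElem.1 hx
      obtain ⟨iy, hiy, hgy⟩ := List.mem_iff_getElem.1 hy
      have e1 : a.length + 1 + iy - a.length - 1 = iy := by omega
      refine ⟨ix, a.length, a.length + 1 + iy, by omega, by omega, by omega, ?_, ?_⟩
      · rw [getD_split_a b M hix, getD_split_b a M (by omega), e1,
          List.getD_eq_getElem a 0 hix, List.getD_eq_getElem b 0 hiy, hgx, hgy]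
        exact hxy
      · rw [getD_split_b a M (by omega), e1, getD_split_M,
          List.getD_eq_getElem b 0 hiy, hgy]
        exact hb y hy

lemma has231_decomp (a b : List ℕ) (M : ℕ) (ha : ∀ x ∈ a, x < M) (hb : ∀ y ∈ b, y < M) :
    has231 (a ++ M :: b) ↔ has231 a ∨ has231 b ∨ ∃ x ∈ a, ∃ y ∈ b, y < x := by
  have hlen := len_split a b M
  constructor
  · rintro ⟨i, j, k, hij, hjk, hk, h1, h2⟩
    rcases lt_trichotomy k a.length with hka | hka | hka
    · left
      exact ⟨i, j, k, hij, hjk, hka,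
        by rwa [getD_split_a b M (by omega), getD_split_a b M (by omega)] at h1,
        by rwa [getD_split_a b M (by omega), getD_split_a b M (by omega)] at h2⟩
    · exfalso
      rw [hka, getD_split_M] at h1
      have := ha _ (mem_a_of_lt b M (show i < a.length by omega))
      omega
    · have hkmem := mem_b_of_gt hka hk
      rcases lt_trichotomy i a.length with hia | hia | hia
      · right; right
        exact ⟨_, mem_a_of_lt b M hia, _, hkmem, h1⟩
      · exfalso
        rw [hia, getD_split_M] at h2
        have := hb _ (mem_b_of_gt (a:=a) (b:=b) (M:=M) (show a.length < j by omega) (by omega))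
        omega
      · right; left
        have hja : a.length < j := by omega
        refine ⟨i - a.length - 1, j - a.length - 1, k - a.length - 1,
          by omega, by omega, by omega, ?_, ?_⟩
        · rwa [getD_split_b a M hka, getD_split_b a M hia] at h1
        · rwa [getD_split_b a M hia, getD_split_b a M hja] at h2
  · rintro (⟨i, j, k, hij, hjk, hk, h1, h2⟩ | ⟨i, j, k, hij, hjk, hk, h1, h2⟩ | ⟨x, hx, y, hy, hxy⟩)
    · exact ⟨i, j, k, hij, hjk, by omega,
        by rwa [getD_split_a b M (by omega), getD_split_a b M (by omega)],
        by rwa [getD_split_a b M (by omega), getD_split_a b M (by omega)]⟩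
    · have e1 : ∀ m : ℕ, a.length + 1 + m - a.length - 1 = m := by omega
      refine ⟨a.length + 1 + i, a.length + 1 + j, a.length + 1 + k, by omega, by omega, by omega, ?_, ?_⟩
      · rw [getD_split_b a M (by omega), getD_split_b a M (by omega), e1, e1]; exact h1
      · rw [getD_split_b a M (by omega), getD_split_b a M (by omega), e1, e1]; exact h2
    · obtain ⟨ix, hix, hgx⟩ := List.mem_iff_getElem.1 hx
      obtain ⟨iy, hiy, hgy⟩ := List.mem_iff_getElem.1 hy
      have e1 : a.length + 1 + iy - a.length - 1 = iy := by omega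
      refine ⟨ix, a.length, a.length + 1 + iy, by omega, by omega, by omega, ?_, ?_⟩
      · rw [getD_split_b a M (by omega), e1, getD_split_a b M hix,
          List.getD_eq_getElem a 0 hix, List.getD_eq_getElem b 0 hiy, hgx, hgy]
        exact hxy
      · rw [getD_split_a b M hix, getD_split_M,
          List.getD_eq_getElem a 0 hix, hgx]
        exact ha x hx


section MapInv
variable (φ : ℕ → ℕ)

lemma majAux_map (l : List ℕ) (h : ∀ x ∈ l, ∀ y ∈ l, (φ x < φ y ↔ x < y)) :
    ∀ i, majAux i (l.map φ) = majAux i l := by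
  induction l with
  | nil => intro i; simp [majAux]
  | cons x t ih =>
    intro i
    cases t with
    | nil => simp [majAux]
    | cons y r =>
      have hxy : (φ y < φ x) ↔ (y < x) := h y (by simp) x (by simp)
      have ht : ∀ u ∈ y :: r, ∀ v ∈ y :: r, (φ u < φ v ↔ u < v) :=
        fun u hu v hv => h u (List.mem_cons_of_mem _ hu) v (List.mem_cons_of_mem _ hv)
      have hmap : (x :: y :: r).map φ = φ x :: ((y :: r).map φ) := by simp
      rw [hmap]
      have hmap2 : (y :: r).map φ = φ y :: r.map φ := by simp
      rw [hmap2, majAux, ← hmap2, majAux, ih ht (i+1), if_congr hxy rfl rfl]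

lemma desL_map (l : List ℕ) (h : ∀ x ∈ l, ∀ y ∈ l, (φ x < φ y ↔ x < y)) :
    desL (l.map φ) = desL l := by
  induction l with
  | nil => simp [desL]
  | cons x t ih =>
    cases t with
    | nil => simp [desL]
    | cons y r =>
      have hxy : (φ y < φ x) ↔ (y < x) := h y (by simp) x (by simp)
      have ht : ∀ u ∈ y :: r, ∀ v ∈ y :: r, (φ u < φ v ↔ u < v) :=
        fun u hu v hv => h u (List.mem_cons_of_mem _ hu) v (List.mem_cons_of_mem _ hv)
      have hmap : (x :: y :: r).map φ = φ x :: ((y :: r).map φ) := by simp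
      rw [hmap]
      have hmap2 : (y :: r).map φ = φ y :: r.map φ := by simp
      rw [hmap2, desL, ← hmap2, desL, ih ht, if_congr hxy rfl rfl]

lemma majL_map (l : List ℕ) (h : ∀ x ∈ l, ∀ y ∈ l, (φ x < φ y ↔ x < y)) :
    majL (l.map φ) = majL l := majAux_map φ l h 0

lemma getD_map' (l : List ℕ) {i : ℕ} (h : i < l.length) :
    (l.map φ).getD i 0 = φ (l.getD i 0) := by
  rw [List.getD_eq_getElem _ 0 (by simpa using h), List.getD_eq_getElem _ 0 h,
    List.getElem_map]

lemma has132_map (l : List ℕ) (h : ∀ x ∈ l, ∀ y ∈ l, (φ x < φ y ↔ x < y)) :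
    has132 (l.map φ) ↔ has132 l := by
  constructor
  · rintro ⟨i, j, k, hij, hjk, hk, h1, h2⟩
    rw [List.length_map] at hk
    rw [getD_map' φ l (by omega), getD_map' φ l (by omega)] at h1 h2
    exact ⟨i, j, k, hij, hjk, hk,
      (h _ (mem_of_getD (by omega)) _ (mem_of_getD (by omega))).1 h1,
      (h _ (mem_of_getD (by omega)) _ (mem_of_getD (by omega))).1 h2⟩
  · rintro ⟨i, j, k, hij, hjk, hk, h1, h2⟩
    refine ⟨i, j, k, hij, hjk, by simpa using hk, ?_, ?_⟩
    · rw [getD_map' φ l (by omega), getD_map' φ l (by omega)]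
      exact (h _ (mem_of_getD (by omega)) _ (mem_of_getD (by omega))).2 h1
    · rw [getD_map' φ l (by omega), getD_map' φ l (by omega)]
      exact (h _ (mem_of_getD (by omega)) _ (mem_of_getD (by omega))).2 h2

lemma has231_map (l : List ℕ) (h : ∀ x ∈ l, ∀ y ∈ l, (φ x < φ y ↔ x < y)) :
    has231 (l.map φ) ↔ has231 l := by
  constructor
  · rintro ⟨i, j, k, hij, hjk, hk, h1, h2⟩
    rw [List.length_map] at hk
    rw [getD_map' φ l (by omega), getD_map' φ l (by omega)] at h1 h2
    exact ⟨i, j, k, hij, hjk, hk,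
      (h _ (mem_of_getD (by omega)) _ (mem_of_getD (by omega))).1 h1,
      (h _ (mem_of_getD (by omega)) _ (mem_of_getD (by omega))).1 h2⟩
  · rintro ⟨i, j, k, hij, hjk, hk, h1, h2⟩
    refine ⟨i, j, k, hij, hjk, by simpa using hk, ?_, ?_⟩
    · rw [getD_map' φ l (by omega), getD_map' φ l (by omega)]
      exact (h _ (mem_of_getD (by omega)) _ (mem_of_getD (by omega))).2 h1
    · rw [getD_map' φ l (by omega), getD_map' φ l (by omega)]
      exact (h _ (mem_of_getD (by omega)) _ (mem_of_getD (by omega))).2 h2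

end MapInv

/-! ### permsOf -/

def permsOf (s : Finset ℕ) : Finset (List ℕ) := (s.sort (· ≤ ·)).permutations.toFinset

lemma mem_permsOf {s : Finset ℕ} {l : List ℕ} :
    l ∈ permsOf s ↔ l.Perm (s.sort (· ≤ ·)) := by
  simp [permsOf, List.mem_permutations]

lemma mem_permsOf' {s : Finset ℕ} {l : List ℕ} :
    l ∈ permsOf s ↔ l.Nodup ∧ ∀ x, x ∈ l ↔ x ∈ s := by
  rw [mem_permsOf]
  constructor
  · intro h
    refine ⟨h.nodup_iff.2 (s.sort_nodup _), fun x => ?_⟩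
    rw [h.mem_iff, Finset.mem_sort]
  · rintro ⟨h1, h2⟩
    exact (List.perm_ext_iff_of_nodup h1 (s.sort_nodup _)).2
      (fun x => by rw [h2, Finset.mem_sort])

lemma length_of_mem_permsOf {s : Finset ℕ} {l : List ℕ} (h : l ∈ permsOf s) :
    l.length = s.card := by
  rw [(mem_permsOf.1 h).length_eq, Finset.length_sort]

lemma permsOf_empty : permsOf ∅ = {[]} := by
  simp [permsOf]

/-! ### topSet -/

def topSet (e : Finset ℕ) (k : ℕ) : Finset ℕ :=
  e.filter (fun x => (e.filter (fun y => x < y)).card < k)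

lemma topSet_subset (e : Finset ℕ) (k : ℕ) : topSet e k ⊆ e := Finset.filter_subset _ _

lemma topSet_sep {e : Finset ℕ} {k : ℕ} {x y : ℕ}
    (hx : x ∈ e \ topSet e k) (hy : y ∈ topSet e k) : x < y := by
  rw [Finset.mem_sdiff] at hx
  obtain ⟨hxe, hxt⟩ := hx
  rw [topSet, Finset.mem_filter] at hy
  have hxc : ¬ ((e.filter (fun z => x < z)).card < k) :=
    fun hc => hxt (Finset.mem_filter.2 ⟨hxe, hc⟩)
  by_contra hle
  push_neg at hle
  have hsub : e.filter (fun z => x < z) ⊆ e.filter (fun z => y < z) := by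
    intro z hz
    rw [Finset.mem_filter] at hz ⊢
    exact ⟨hz.1, lt_of_le_of_lt hle hz.2⟩
  have := Finset.card_le_card hsub
  omega

lemma topSet_unique {e A B : Finset ℕ} (hAB : A ∪ B = e) (hd : Disjoint A B)
    (hsep : ∀ x ∈ A, ∀ y ∈ B, y < x) : A = topSet e A.card := by
  ext x
  rw [topSet, Finset.mem_filter]
  constructor
  · intro hx
    have hxe : x ∈ e := hAB ▸ Finset.mem_union_left _ hx
    refine ⟨hxe, ?_⟩
    have hsub : e.filter (fun z => x < z) ⊆ A.erase x := by
      intro z hz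
      rw [Finset.mem_filter] at hz
      rw [Finset.mem_erase]
      have hzA : z ∈ A := by
        have : z ∈ A ∪ B := hAB ▸ hz.1
        rcases Finset.mem_union.1 this with h | h
        · exact h
        · exact absurd (hsep x hx z h) (by omega)
      exact ⟨by omega, hzA⟩
    calc (e.filter (fun z => x < z)).card ≤ (A.erase x).card := Finset.card_le_card hsub
      _ < A.card := Finset.card_erase_lt_of_mem hx
  · rintro ⟨hxe, hcard⟩
    have : x ∈ A ∪ B := hAB ▸ hxe
    rcases Finset.mem_union.1 this with h | h
    · exact h
    · exfalso
      have hsub : A ⊆ e.filter (fun z => x < z) := by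
        intro z hz
        rw [Finset.mem_filter]
        exact ⟨hAB ▸ Finset.mem_union_left _ hz, hsep z hz x h⟩
      have := Finset.card_le_card hsub
      omega

lemma image_above_card (e : Finset ℕ) :
    e.image (fun x => (e.filter (fun y => x < y)).card) = Finset.range e.card := by
  set g := fun x => (e.filter (fun y => x < y)).card with hg
  have hmono : ∀ x ∈ e, ∀ y ∈ e, x < y → g y < g x := by
    intro x hx y hy hxy
    have hsub : e.filter (fun z => y < z) ⊂ e.filter (fun z => x < z) := by
      rw [Finset.ssubset_iff_of_subset]
      · exact ⟨y, Finset.mem_filter.2 ⟨hy, hxy⟩, by simp⟩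
      · intro z hz
        rw [Finset.mem_filter] at hz ⊢
        exact ⟨hz.1, hxy.trans hz.2⟩
    exact Finset.card_lt_card hsub
  have hinj : Set.InjOn g e := by
    intro x hx y hy hxy
    rcases lt_trichotomy x y with h | h | h
    · exact absurd hxy (by have := hmono x hx y hy h; omega)
    · exact h
    · exact absurd hxy (by have := hmono y hy x hx h; omega)
  have hsub : e.image g ⊆ Finset.range e.card := by
    intro m hm
    rw [Finset.mem_image] at hm
    obtain ⟨x, hx, rfl⟩ := hm
    rw [Finset.mem_range]
    calc g x ≤ (e.erase x).card := Finset.card_le_card (by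
        intro z hz
        rw [Finset.mem_filter] at hz
        rw [Finset.mem_erase]
        exact ⟨by omega, hz.1⟩)
      _ < e.card := Finset.card_erase_lt_of_mem hx
  have hcard : (e.image g).card = (Finset.range e.card).card := by
    rw [Finset.card_image_of_injOn hinj, Finset.card_range]
  exact Finset.eq_of_subset_of_card_le hsub (le_of_eq hcard.symm)

lemma card_topSet {e : Finset ℕ} {k : ℕ} (h : k ≤ e.card) : (topSet e k).card = k := by
  set g := fun x => (e.filter (fun y => x < y)).card with hg
  have hinj : Set.InjOn g e := by
    intro x hx y hy hxy
    rcases lt_trichotomy x y with hlt | heq | hgt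
    · exfalso
      have hsub : e.filter (fun z => y < z) ⊂ e.filter (fun z => x < z) := by
        rw [Finset.ssubset_iff_of_subset]
        · exact ⟨y, Finset.mem_filter.2 ⟨hy, hlt⟩, by simp⟩
        · intro z hz
          rw [Finset.mem_filter] at hz ⊢
          exact ⟨hz.1, hlt.trans hz.2⟩
      have := Finset.card_lt_card hsub
      simp only [hg] at hxy; omega
    · exact heq
    · exfalso
      have hsub : e.filter (fun z => x < z) ⊂ e.filter (fun z => y < z) := by
        rw [Finset.ssubset_iff_of_subset]
        · exact ⟨x, Finset.mem_filter.2 ⟨hx, hgt⟩, by simp⟩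
        · intro z hz
          rw [Finset.mem_filter] at hz ⊢
          exact ⟨hz.1, hgt.trans hz.2⟩
      have := Finset.card_lt_card hsub
      simp only [hg] at hxy; omega
  have himg : (topSet e k).image g = (Finset.range e.card).filter (fun m => m < k) := by
    rw [← image_above_card e, Finset.filter_image]
    rfl
  have : (topSet e k).card = ((topSet e k).image g).card :=
    (Finset.card_image_of_injOn (hinj.mono (by exact_mod_cast topSet_subset e k))).symm
  rw [this, himg]
  have : (Finset.range e.card).filter (fun m => m < k) = Finset.range k := by
    ext m
    simp only [Finset.mem_filter, Finset.mem_range]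
    omega
  rw [this, Finset.card_range]

/-! ### weights and generating sums -/

noncomputable def wt (q t : ℚ) (l : List ℕ) : ℚ := q ^ majL l * t ^ desL l

lemma wt_nil (q t : ℚ) : wt q t [] = 1 := by simp [wt, majL, majAux, desL]

noncomputable def F (P : List ℕ → Prop) (s : Finset ℕ) (q t : ℚ) : ℚ :=
  ∑ l ∈ (permsOf s).filter P, wt q t l

lemma wt_decomp (q t : ℚ) (a b : List ℕ) (M : ℕ) (ha : ∀ x ∈ a, x < M)
    (hb : ∀ y ∈ b, y < M) :
    wt q t (a ++ M :: b) =
      wt q t a * (if b = [] then 1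
        else q ^ (a.length + 1) * t * wt q (q ^ (a.length + 1) * t) b) := by
  unfold wt
  rw [majL_decomp a b M ha hb, desL_decomp a b M ha hb]
  by_cases hbe : b = []
  · simp [hbe]
  · rw [if_neg hbe, if_neg hbe, if_neg hbe]
    rw [pow_add, pow_add, mul_pow, ← pow_mul]
    ring

lemma split_at_index {l : List ℕ} {k : ℕ} (h : k < l.length) :
    l = l.take k ++ l[k] :: l.drop (k + 1) := by
  conv_lhs => rw [← List.take_append_drop k l]
  rw [List.drop_eq_getElem_cons h]

/-- The master decomposition lemma. -/
lemma master (P : List ℕ → Prop) (hnil : P [])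
    (s : Finset ℕ) (hs : s.Nonempty) (Tk : ℕ → Finset ℕ)
    (hTsub : ∀ k, k < s.card → Tk k ⊆ s.erase (s.max' hs))
    (hTcard : ∀ k, k < s.card → (Tk k).card = k)
    (hP : ∀ a b : List ℕ, a.Nodup → b.Nodup →
      (∀ x, (x ∈ a ∨ x ∈ b) ↔ x ∈ s.erase (s.max' hs)) →
      (∀ x, ¬(x ∈ a ∧ x ∈ b)) →
      (P (a ++ s.max' hs :: b) ↔ (P a ∧ P b ∧ a.toFinset = Tk a.length)))
    (q t : ℚ) :
    F P s q t = ∑ k ∈ Finset.range s.card, F P (Tk k) q t *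
      (if k = s.card - 1 then 1
       else q ^ (k+1) * t * F P (s.erase (s.max' hs) \ Tk k) q (q ^ (k+1) * t)) := by
  classical
  set M := s.max' hs with hM
  set e := s.erase M with he
  set n := s.card with hn
  have hMs : M ∈ s := s.max'_mem hs
  have hlt : ∀ x ∈ e, x < M := by
    intro x hx
    rw [he, Finset.mem_erase] at hx
    exact lt_of_le_of_ne (s.le_max' x hx.2) hx.1
  have hMe : M ∉ e := Finset.notMem_erase _ _
  have hecard : e.card = n - 1 := Finset.card_erase_of_mem hMs
  have hn0 : 0 < n := Finset.card_pos.2 hs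
  -- facts about elements of the left side
  have key : ∀ l ∈ (permsOf s).filter P,
      (⟨l.idxOf M, (l.take (l.idxOf M), l.drop (l.idxOf M + 1))⟩ :
        (_ : ℕ) × (List ℕ × List ℕ)) ∈
        (Finset.range n).sigma
          (fun k => ((permsOf (Tk k)).filter P) ×ˢ ((permsOf (e \ Tk k)).filter P)) ∧
      l = l.take (l.idxOf M) ++ M :: l.drop (l.idxOf M + 1) := by
    intro l hl
    rw [Finset.mem_filter] at hl
    obtain ⟨hlp, hlP⟩ := hl
    obtain ⟨hnd, hmem⟩ := mem_permsOf'.1 hlp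
    have hlen : l.length = n := length_of_mem_permsOf hlp
    have hMl : M ∈ l := (hmem M).2 hMs
    set k := l.idxOf M with hk
    have hkl : k < l.length := List.idxOf_lt_length_iff.2 hMl
    have hgk : l[k] = M := List.getElem_idxOf hkl
    have hsplit : l = l.take k ++ M :: l.drop (k + 1) := by
      conv_lhs => rw [split_at_index hkl]
      rw [hgk]
    set a := l.take k with hadef
    set b := l.drop (k + 1) with hbdef
    have halen : a.length = k := by
      rw [hadef, List.length_take]; omega
    have hnd' : a.Nodup ∧ (M :: b).Nodup ∧ a.Disjoint (M :: b) :=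
      List.nodup_append'.1 (hsplit ▸ hnd)
    have hand : a.Nodup := hnd'.1
    have hbnd : b.Nodup := (List.nodup_cons.1 hnd'.2.1).2
    have hMa : M ∉ a := fun hma => hnd'.2.2 hma List.mem_cons_self
    have hMb : M ∉ b := (List.nodup_cons.1 hnd'.2.1).1
    have hdisj : ∀ x, ¬(x ∈ a ∧ x ∈ b) := by
      rintro x ⟨hxa, hxb⟩
      exact hnd'.2.2 hxa (List.mem_cons_of_mem _ hxb)
    have hpart : ∀ x, (x ∈ a ∨ x ∈ b) ↔ x ∈ e := by
      intro x
      constructor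
      · rintro (hx | hx)
        · rw [he, Finset.mem_erase]
          refine ⟨fun hxM => hMa (hxM ▸ hx), (hmem x).1 ?_⟩
          rw [hsplit]; exact List.mem_append_left _ hx
        · rw [he, Finset.mem_erase]
          refine ⟨fun hxM => hMb (hxM ▸ hx), (hmem x).1 ?_⟩
          rw [hsplit]; exact List.mem_append_right _ (List.mem_cons_of_mem _ hx)
      · intro hx
        rw [he, Finset.mem_erase] at hx
        have : x ∈ l := (hmem x).2 hx.2
        rw [hsplit] at this
        rcases List.mem_append.1 this with h | h
        · exact Or.inl h
        · rcases List.mem_cons.1 h with h | h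
          · exact absurd h hx.1
          · exact Or.inr h
    have hPl : P (a ++ M :: b) := hsplit ▸ hlP
    have hPabc := (hP a b hand hbnd hpart hdisj).1 hPl
    have hTke : a.toFinset = Tk k := halen ▸ hPabc.2.2
    have hkn : k < n := by omega
    refine ⟨?_, hsplit⟩
    rw [Finset.mem_sigma, Finset.mem_range, Finset.mem_product, Finset.mem_filter,
      Finset.mem_filter]
    refine ⟨hkn, ⟨mem_permsOf'.2 ⟨hand, fun x => ?_⟩, hPabc.1⟩,
      ⟨mem_permsOf'.2 ⟨hbnd, fun x => ?_⟩, hPabc.2.1⟩⟩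
    · rw [← hTke, List.mem_toFinset]
    · rw [Finset.mem_sdiff, ← hTke, List.mem_toFinset]
      constructor
      · intro hxb
        exact ⟨(hpart x).1 (Or.inr hxb), fun hxa => hdisj x ⟨hxa, hxb⟩⟩
      · rintro ⟨hxe, hxa⟩
        rcases (hpart x).2 hxe with h | h
        · exact absurd h hxa
        · exact h
  -- facts about elements of the right side
  have key2 : ∀ x ∈ (Finset.range n).sigma
      (fun k => ((permsOf (Tk k)).filter P) ×ˢ ((permsOf (e \ Tk k)).filter P)),
      (x.2.1 ++ M :: x.2.2) ∈ (permsOf s).filter P ∧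
      x.2.1.length = x.1 ∧ (x.2.1 ++ M :: x.2.2).idxOf M = x.1 ∧
      (∀ y ∈ x.2.1, y < M) ∧ (∀ y ∈ x.2.2, y < M) := by
    rintro ⟨k, a, b⟩ hx
    rw [Finset.mem_sigma, Finset.mem_range, Finset.mem_product, Finset.mem_filter,
      Finset.mem_filter] at hx
    obtain ⟨hkn, ⟨hap, haP⟩, ⟨hbp, hbP⟩⟩ := hx
    obtain ⟨hand, hamem⟩ := mem_permsOf'.1 hap
    obtain ⟨hbnd, hbmem⟩ := mem_permsOf'.1 hbp
    have hae : ∀ y ∈ a, y ∈ e := fun y hy => hTsub k hkn ((hamem y).1 hy)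
    have hbe : ∀ y ∈ b, y ∈ e := fun y hy =>
      (Finset.mem_sdiff.1 ((hbmem y).1 hy)).1
    have haM : ∀ y ∈ a, y < M := fun y hy => hlt y (hae y hy)
    have hbM : ∀ y ∈ b, y < M := fun y hy => hlt y (hbe y hy)
    have hMa : M ∉ a := fun h => absurd (haM M h) (lt_irrefl M)
    have hMb : M ∉ b := fun h => absurd (hbM M h) (lt_irrefl M)
    have halen : a.length = k := by
      rw [length_of_mem_permsOf hap, hTcard k hkn]
    have hdisj : ∀ y, ¬(y ∈ a ∧ y ∈ b) := by
      rintro y ⟨hya, hyb⟩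
      exact (Finset.mem_sdiff.1 ((hbmem y).1 hyb)).2 ((hamem y).1 hya)
    have hpart : ∀ y, (y ∈ a ∨ y ∈ b) ↔ y ∈ e := by
      intro y
      constructor
      · rintro (h | h)
        · exact hae y h
        · exact hbe y h
      · intro hy
        by_cases hyT : y ∈ Tk k
        · exact Or.inl ((hamem y).2 hyT)
        · exact Or.inr ((hbmem y).2 (Finset.mem_sdiff.2 ⟨hy, hyT⟩))
    have hTke : a.toFinset = Tk a.length := by
      rw [halen]
      ext y
      rw [List.mem_toFinset, hamem]
    have hnodup : (a ++ M :: b).Nodup := by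
      rw [List.nodup_append']
      refine ⟨hand, List.nodup_cons.2 ⟨hMb, hbnd⟩, ?_⟩
      intro y hya hyMb
      rcases List.mem_cons.1 hyMb with h | h
      · exact hMa (h ▸ hya)
      · exact hdisj y ⟨hya, h⟩
    have hmem : ∀ y, y ∈ a ++ M :: b ↔ y ∈ s := by
      intro y
      rw [List.mem_append, List.mem_cons]
      constructor
      · rintro (h | h | h)
        · exact Finset.mem_of_mem_erase (he ▸ hae y h)
        · exact h ▸ hMs
        · exact Finset.mem_of_mem_erase (he ▸ hbe y h)
      · intro hy
        by_cases hyM : y = M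
        · exact Or.inr (Or.inl hyM)
        · have : y ∈ e := by rw [he, Finset.mem_erase]; exact ⟨hyM, hy⟩
          rcases (hpart y).2 this with h | h
          · exact Or.inl h
          · exact Or.inr (Or.inr h)
    have hidx : (a ++ M :: b).idxOf M = k := by
      rw [List.idxOf_append_of_notMem hMa, List.idxOf_cons_self, halen]
      omega
    refine ⟨Finset.mem_filter.2 ⟨mem_permsOf'.2 ⟨hnodup, hmem⟩, ?_⟩, halen, hidx, haM, hbM⟩
    exact (hP a b hand hbnd hpart hdisj).2 ⟨haP, hbP, hTke⟩
  -- the bijection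
  have step1 : F P s q t = ∑ x ∈ (Finset.range n).sigma
      (fun k => ((permsOf (Tk k)).filter P) ×ˢ ((permsOf (e \ Tk k)).filter P)),
      wt q t (x.2.1 ++ M :: x.2.2) := by
    refine Finset.sum_nbij'
      (i := fun l => ⟨l.idxOf M, (l.take (l.idxOf M), l.drop (l.idxOf M + 1))⟩)
      (j := fun x => x.2.1 ++ M :: x.2.2) ?_ ?_ ?_ ?_ ?_
    · intro l hl; exact (key l hl).1
    · intro x hx; exact (key2 x hx).1
    · intro l hl; exact ((key l hl).2).symm
    · rintro ⟨k, a, b⟩ hx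
      obtain ⟨_, halen, hidx, _, _⟩ := key2 ⟨k, a, b⟩ hx
      dsimp only at halen hidx ⊢
      have ht : (a ++ M :: b).take k = a := by
        rw [← halen, List.take_left]
      have hd : (a ++ M :: b).drop (k + 1) = b := by
        rw [← halen, ← List.drop_drop (i := 1) (j := a.length), List.drop_left]
        rfl
      rw [hidx, ht, hd]
    · intro l hl
      conv_lhs => rw [(key l hl).2]
  rw [step1, Finset.sum_sigma]
  refine Finset.sum_congr rfl ?_
  intro k hk
  rw [Finset.mem_range] at hk
  rw [Finset.sum_product]
  -- decompose the weight
  have hwt : ∀ a ∈ (permsOf (Tk k)).filter P, ∀ b ∈ (permsOf (e \ Tk k)).filter P,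
      wt q t (a ++ M :: b) = wt q t a *
        (if b = [] then 1 else q ^ (k + 1) * t * wt q (q ^ (k + 1) * t) b) := by
    intro a ha b hb
    have hx : (⟨k, a, b⟩ : (_ : ℕ) × (List ℕ × List ℕ)) ∈ (Finset.range n).sigma
        (fun k => ((permsOf (Tk k)).filter P) ×ˢ ((permsOf (e \ Tk k)).filter P)) := by
      rw [Finset.mem_sigma, Finset.mem_range, Finset.mem_product]
      exact ⟨hk, ha, hb⟩
    obtain ⟨_, halen, _, haM, hbM⟩ := key2 ⟨k, a, b⟩ hx
    rw [wt_decomp q t a b M haM hbM, halen]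
  by_cases hke : k = n - 1
  · -- b must be empty
    have hTk : Tk k = e := by
      refine Finset.eq_of_subset_of_card_le (hTsub k hk) ?_
      rw [hTcard k hk, hecard, hke]
    have hsd : e \ Tk k = ∅ := by rw [hTk, Finset.sdiff_self]
    have haM : ∀ a ∈ (permsOf (Tk k)).filter P, ∀ y ∈ a, y < M := by
      intro a ha y hy
      have hmm := mem_permsOf'.1 (Finset.mem_filter.1 ha).1
      exact hlt y (hTsub k hk ((hmm.2 y).1 hy))
    rw [if_pos hke, hsd, permsOf_empty, Finset.filter_singleton, if_pos hnil, mul_one, F]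
    refine Finset.sum_congr rfl ?_
    intro a ha
    rw [Finset.sum_singleton, wt_decomp q t a [] M (haM a ha) (by simp)]
    simp
  · -- all b are nonempty
    have hbne : ∀ b ∈ (permsOf (e \ Tk k)).filter P, b ≠ [] := by
      intro b hb hbe
      have hll := length_of_mem_permsOf (Finset.mem_filter.1 hb).1
      rw [hbe] at hll
      have hcsd : (e \ Tk k).card = e.card - k := by
        rw [Finset.card_sdiff_of_subset (hTsub k hk), hTcard k hk]
      simp at hll
      omega
    rw [if_neg hke]
    have hstep : ∀ a ∈ (permsOf (Tk k)).filter P,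
        ∑ b ∈ (permsOf (e \ Tk k)).filter P, wt q t (a ++ M :: b)
          = wt q t a * (q ^ (k+1) * t * F P (e \ Tk k) q (q ^ (k+1) * t)) := by
      intro a ha
      rw [F, Finset.mul_sum, Finset.mul_sum]
      refine Finset.sum_congr rfl ?_
      intro b hb
      rw [hwt a ha b hb, if_neg (hbne b hb)]
    rw [Finset.sum_congr rfl hstep, ← Finset.sum_mul]
    rfl


/-! ### instantiation of the master lemma -/

lemma not_has132_nil : ¬ has132 [] := by
  rintro ⟨i, j, k, _, _, hk, _⟩
  simp at hk

lemma not_has231_nil : ¬ has231 [] := by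
  rintro ⟨i, j, k, _, _, hk, _⟩
  simp at hk

lemma hP132 (s : Finset ℕ) (hs : s.Nonempty) :
    ∀ a b : List ℕ, a.Nodup → b.Nodup →
      (∀ x, (x ∈ a ∨ x ∈ b) ↔ x ∈ s.erase (s.max' hs)) →
      (∀ x, ¬(x ∈ a ∧ x ∈ b)) →
      ((¬ has132 (a ++ s.max' hs :: b)) ↔
        ((¬ has132 a) ∧ (¬ has132 b) ∧
          a.toFinset = topSet (s.erase (s.max' hs)) a.length)) := by
  intro a b hand hbnd hpart hdisj
  set M := s.max' hs
  set e := s.erase M with he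
  have hlt : ∀ x ∈ e, x < M := by
    intro x hx
    rw [he, Finset.mem_erase] at hx
    exact lt_of_le_of_ne (s.le_max' x hx.2) hx.1
  have haM : ∀ x ∈ a, x < M := fun x hx => hlt x ((hpart x).1 (Or.inl hx))
  have hbM : ∀ x ∈ b, x < M := fun x hx => hlt x ((hpart x).1 (Or.inr hx))
  have hunion : a.toFinset ∪ b.toFinset = e := by
    ext x
    rw [Finset.mem_union, List.mem_toFinset, List.mem_toFinset]
    exact hpart x
  have hdisj' : Disjoint a.toFinset b.toFinset := by
    rw [Finset.disjoint_left]
    intro x hx hx'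
    exact hdisj x ⟨List.mem_toFinset.1 hx, List.mem_toFinset.1 hx'⟩
  have hacard : a.toFinset.card = a.length := List.toFinset_card_of_nodup hand
  rw [has132_decomp a b M haM hbM]
  push_neg
  constructor
  · rintro ⟨h1, h2, h3⟩
    refine ⟨h1, h2, ?_⟩
    have hsep : ∀ x ∈ a.toFinset, ∀ y ∈ b.toFinset, y < x := by
      intro x hx y hy
      rw [List.mem_toFinset] at hx hy
      have hne : x ≠ y := fun hxy => hdisj x ⟨hx, hxy ▸ hy⟩
      have := h3 x hx y hy
      omega
    have := topSet_unique hunion hdisj' hsep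
    rwa [hacard] at this
  · rintro ⟨h1, h2, h3⟩
    refine ⟨h1, h2, ?_⟩
    intro x hx y hy
    have hxT : x ∈ topSet e a.length := h3 ▸ List.mem_toFinset.2 hx
    have hyT : y ∈ e \ topSet e a.length := by
      rw [Finset.mem_sdiff]
      refine ⟨(hpart y).1 (Or.inr hy), fun hc => ?_⟩
      rw [← h3, List.mem_toFinset] at hc
      exact hdisj y ⟨hc, hy⟩
    have := topSet_sep hyT hxT
    omega

lemma hP231 (s : Finset ℕ) (hs : s.Nonempty) :
    ∀ a b : List ℕ, a.Nodup → b.Nodup →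
      (∀ x, (x ∈ a ∨ x ∈ b) ↔ x ∈ s.erase (s.max' hs)) →
      (∀ x, ¬(x ∈ a ∧ x ∈ b)) →
      ((¬ has231 (a ++ s.max' hs :: b)) ↔
        ((¬ has231 a) ∧ (¬ has231 b) ∧
          a.toFinset = (s.erase (s.max' hs)) \
            topSet (s.erase (s.max' hs)) ((s.erase (s.max' hs)).card - a.length))) := by
  intro a b hand hbnd hpart hdisj
  set M := s.max' hs
  set e := s.erase M with he
  have hlt : ∀ x ∈ e, x < M := by
    intro x hx
    rw [he, Finset.mem_erase] at hx
    exact lt_of_le_of_ne (s.le_max' x hx.2) hx.1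
  have haM : ∀ x ∈ a, x < M := fun x hx => hlt x ((hpart x).1 (Or.inl hx))
  have hbM : ∀ x ∈ b, x < M := fun x hx => hlt x ((hpart x).1 (Or.inr hx))
  have hunion : a.toFinset ∪ b.toFinset = e := by
    ext x
    rw [Finset.mem_union, List.mem_toFinset, List.mem_toFinset]
    exact hpart x
  have hdisj' : Disjoint a.toFinset b.toFinset := by
    rw [Finset.disjoint_left]
    intro x hx hx'
    exact hdisj x ⟨List.mem_toFinset.1 hx, List.mem_toFinset.1 hx'⟩
  have hacard : a.toFinset.card = a.length := List.toFinset_card_of_nodup hand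
  have hbcard : b.toFinset.card = b.length := List.toFinset_card_of_nodup hbnd
  have hcards : a.length + b.length = e.card := by
    rw [← hunion, Finset.card_union_of_disjoint hdisj', hacard, hbcard]
  have hblen : b.length = e.card - a.length := by omega
  rw [has231_decomp a b M haM hbM]
  push_neg
  constructor
  · rintro ⟨h1, h2, h3⟩
    refine ⟨h1, h2, ?_⟩
    have hsep : ∀ x ∈ b.toFinset, ∀ y ∈ a.toFinset, y < x := by
      intro x hx y hy
      rw [List.mem_toFinset] at hx hy
      have hne : x ≠ y := fun hxy => hdisj y ⟨hy, hxy ▸ hx⟩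
      have := h3 y hy x hx
      omega
    have hba : b.toFinset ∪ a.toFinset = e := by rw [Finset.union_comm]; exact hunion
    have hbT := topSet_unique (e := e) hba hdisj'.symm hsep
    rw [hbcard, hblen] at hbT
    ext x
    rw [List.mem_toFinset, Finset.mem_sdiff, ← hbT, List.mem_toFinset]
    constructor
    · intro hx
      exact ⟨(hpart x).1 (Or.inl hx), fun hc => hdisj x ⟨hx, hc⟩⟩
    · rintro ⟨hxe, hxb⟩
      rcases (hpart x).2 hxe with h | h
      · exact h
      · exact absurd h hxb
  · rintro ⟨h1, h2, h3⟩
    refine ⟨h1, h2, ?_⟩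
    have hbT : b.toFinset = topSet e (e.card - a.length) := by
      ext x
      rw [List.mem_toFinset]
      constructor
      · intro hx
        have hxe : x ∈ e := (hpart x).1 (Or.inr hx)
        have hxa : x ∉ a.toFinset := by
          rw [List.mem_toFinset]
          exact fun hc => hdisj x ⟨hc, hx⟩
        rw [h3, Finset.mem_sdiff] at hxa
        push_neg at hxa
        exact hxa hxe
      · intro hx
        have hxe : x ∈ e := topSet_subset _ _ hx
        rcases (hpart x).2 hxe with h | h
        · exfalso
          have := h3 ▸ List.mem_toFinset.2 h
          rw [Finset.mem_sdiff] at this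
          exact this.2 hx
        · exact h
    intro x hx y hy
    have hxT : x ∈ e \ topSet e (e.card - a.length) := by
      rw [← hbT]
      have := h3 ▸ List.mem_toFinset.2 hx
      rw [Finset.mem_sdiff, ← hbT] at this
      rw [Finset.mem_sdiff]
      exact this
    have hyT : y ∈ topSet e (e.card - a.length) := hbT ▸ List.mem_toFinset.2 hy
    have := topSet_sep hxT hyT
    omega

/-! ### relabeling invariance -/

lemma F_card (P : List ℕ → Prop)
    (hPmap : ∀ (φ : ℕ → ℕ) (l : List ℕ),
      (∀ x ∈ l, ∀ y ∈ l, (φ x < φ y ↔ x < y)) → (P (l.map φ) ↔ P l))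
    (s : Finset ℕ) (q t : ℚ) :
    F P s q t = F P (Finset.range s.card) q t := by
  classical
  set k := s.card with hk
  set L := s.sort (· ≤ ·) with hL
  set φ : ℕ → ℕ := fun i => L.getD i 0 with hφ
  set ψ : ℕ → ℕ := fun x => L.idxOf x with hψ
  have hLlen : L.length = k := s.length_sort _
  have hLnd : L.Nodup := s.sort_nodup _
  have hLsort : L.Pairwise (· < ·) := (Finset.sortedLT_sort s).pairwise
  have hφmem : ∀ i, i < k → φ i ∈ s := by
    intro i hi
    rw [hφ]
    simp only
    rw [List.getD_eq_getElem L 0 (by omega)]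
    rw [← Finset.mem_sort (α := ℕ) (· ≤ ·)]
    exact List.getElem_mem _
  have hψlt : ∀ x ∈ s, ψ x < k := by
    intro x hx
    rw [hψ]
    simp only
    rw [← hLlen]
    exact List.idxOf_lt_length_iff.2 ((Finset.mem_sort (α := ℕ) (· ≤ ·)).2 hx)
  have hφψ : ∀ x ∈ s, φ (ψ x) = x := by
    intro x hx
    rw [hφ, hψ]
    simp only
    rw [List.getD_eq_getElem L 0 (by rw [hLlen]; exact hψlt x hx)]
    exact List.getElem_idxOf _
  have hinc : ∀ i j, i < k → j < k → (φ i < φ j ↔ i < j) := by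
    intro i j hi hj
    have hmono : ∀ i j, i < k → j < k → i < j → φ i < φ j := by
      intro i j hi hj hij
      rw [hφ]; simp only
      rw [List.getD_eq_getElem L 0 (by omega), List.getD_eq_getElem L 0 (by omega)]
      exact List.pairwise_iff_getElem.1 hLsort i j (by omega) (by omega) hij
    constructor
    · intro h
      rcases lt_trichotomy i j with h' | h' | h'
      · exact h'
      · exact absurd h (by rw [h']; exact lt_irrefl _)
      · exact absurd (hmono j i hj hi h') (by omega)
    · exact hmono i j hi hj
  have hψφ : ∀ i, i < k → ψ (φ i) = i := by
    intro i hi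
    rw [hφ, hψ]
    simp only
    rw [List.getD_eq_getElem L 0 (by omega)]
    exact List.Nodup.idxOf_getElem hLnd i _
  refine Finset.sum_nbij' (i := fun l => l.map ψ) (j := fun l => l.map φ)
    ?_ ?_ ?_ ?_ ?_
  · -- maps into
    intro l hl
    rw [Finset.mem_filter] at hl ⊢
    obtain ⟨hlp, hlP⟩ := hl
    obtain ⟨hnd, hmem⟩ := mem_permsOf'.1 hlp
    have hls : ∀ x ∈ l, x ∈ s := fun x hx => (hmem x).1 hx
    have hcompat : ∀ x ∈ l, ∀ y ∈ l, (ψ x < ψ y ↔ x < y) := by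
      intro x hx y hy
      rw [← hinc (ψ x) (ψ y) (hψlt x (hls x hx)) (hψlt y (hls y hy)),
        hφψ x (hls x hx), hφψ y (hls y hy)]
    constructor
    · rw [mem_permsOf']
      constructor
      · refine List.Nodup.map_on ?_ hnd
        intro x hx y hy hxy
        rw [← hφψ x (hls x hx), ← hφψ y (hls y hy), hxy]
      · intro u
        rw [List.mem_map, Finset.mem_range]
        constructor
        · rintro ⟨x, hx, rfl⟩
          exact hψlt x (hls x hx)
        · intro hu
          exact ⟨φ u, (hmem _).2 (hφmem u hu), hψφ u hu⟩
    · exact (hPmap ψ l hcompat).2 hlP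
  · intro l hl
    rw [Finset.mem_filter] at hl ⊢
    obtain ⟨hlp, hlP⟩ := hl
    obtain ⟨hnd, hmem⟩ := mem_permsOf'.1 hlp
    have hls : ∀ x ∈ l, x < k := fun x hx => Finset.mem_range.1 ((hmem x).1 hx)
    have hcompat : ∀ x ∈ l, ∀ y ∈ l, (φ x < φ y ↔ x < y) := by
      intro x hx y hy
      exact hinc x y (hls x hx) (hls y hy)
    constructor
    · rw [mem_permsOf']
      constructor
      · refine List.Nodup.map_on ?_ hnd
        intro x hx y hy hxy
        rw [← hψφ x (hls x hx), ← hψφ y (hls y hy), hxy]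
      · intro u
        rw [List.mem_map]
        constructor
        · rintro ⟨x, hx, rfl⟩
          exact hφmem x (hls x hx)
        · intro hu
          exact ⟨ψ u, (hmem _).2 (Finset.mem_range.2 (hψlt u hu)), hφψ u hu⟩
    · exact (hPmap φ l hcompat).2 hlP
  · intro l hl
    rw [Finset.mem_filter] at hl
    obtain ⟨hnd, hmem⟩ := mem_permsOf'.1 hl.1
    show List.map φ (List.map ψ l) = l
    rw [List.map_map]
    have : ∀ x ∈ l, (φ ∘ ψ) x = id x := by
      intro x hx
      simp only [Function.comp_apply, id_eq]
      exact hφψ x ((hmem x).1 hx)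
    rw [List.map_congr_left this, List.map_id]
  · intro l hl
    rw [Finset.mem_filter] at hl
    obtain ⟨hnd, hmem⟩ := mem_permsOf'.1 hl.1
    show List.map ψ (List.map φ l) = l
    rw [List.map_map]
    have : ∀ x ∈ l, (ψ ∘ φ) x = id x := by
      intro x hx
      simp only [Function.comp_apply, id_eq]
      exact hψφ x (Finset.mem_range.1 ((hmem x).1 hx))
    rw [List.map_congr_left this, List.map_id]
  · intro l hl
    rw [Finset.mem_filter] at hl
    obtain ⟨hnd, hmem⟩ := mem_permsOf'.1 hl.1
    have hls : ∀ x ∈ l, x ∈ s := fun x hx => (hmem x).1 hx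
    have hcompat : ∀ x ∈ l, ∀ y ∈ l, (ψ x < ψ y ↔ x < y) := by
      intro x hx y hy
      rw [← hinc (ψ x) (ψ y) (hψlt x (hls x hx)) (hψlt y (hls y hy)),
        hφψ x (hls x hx), hφψ y (hls y hy)]
    show wt q t l = wt q t (List.map ψ l)
    rw [wt, wt, majL_map ψ l hcompat, desL_map ψ l hcompat]

lemma map132 : ∀ (φ : ℕ → ℕ) (l : List ℕ),
    (∀ x ∈ l, ∀ y ∈ l, (φ x < φ y ↔ x < y)) → (¬ has132 (l.map φ) ↔ ¬ has132 l) :=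
  fun φ l h => not_congr (has132_map φ l h)

lemma map231 : ∀ (φ : ℕ → ℕ) (l : List ℕ),
    (∀ x ∈ l, ∀ y ∈ l, (φ x < φ y ↔ x < y)) → (¬ has231 (l.map φ) ↔ ¬ has231 l) :=
  fun φ l h => not_congr (has231_map φ l h)

/-! ### the recursions -/

noncomputable def f132 (n : ℕ) (q t : ℚ) : ℚ :=
  F (fun l => ¬ has132 l) (Finset.range n) q t

noncomputable def f231 (n : ℕ) (q t : ℚ) : ℚ :=
  F (fun l => ¬ has231 l) (Finset.range n) q t

lemma F132_card (s : Finset ℕ) (q t : ℚ) :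
    F (fun l => ¬ has132 l) s q t = f132 s.card q t :=
  F_card _ map132 s q t

lemma F231_card (s : Finset ℕ) (q t : ℚ) :
    F (fun l => ¬ has231 l) s q t = f231 s.card q t :=
  F_card _ map231 s q t

lemma f132_rec (n : ℕ) (hn : 0 < n) (q t : ℚ) :
    f132 n q t = ∑ k ∈ Finset.range n, f132 k q t *
      (if k = n - 1 then 1 else q ^ (k+1) * t * f132 (n-1-k) q (q ^ (k+1) * t)) := by
  set s := Finset.range n with hsdef
  have hs : s.Nonempty := by
    rw [hsdef, Finset.nonempty_range_iff]; omega
  have hscard : s.card = n := Finset.card_range n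
  set M := s.max' hs
  set e := s.erase M with he
  have hecard : e.card = n - 1 := by
    rw [he, Finset.card_erase_of_mem (s.max'_mem hs), hscard]
  have h := master (fun l => ¬ has132 l) not_has132_nil s hs
    (fun k => topSet e k)
    (fun k hk => topSet_subset e k)
    (fun k hk => card_topSet (by omega))
    (hP132 s hs) q t
  rw [hscard] at h
  simp only [show s.erase (s.max' hs) = e from rfl] at h
  have hgoal : f132 n q t = F (fun l => ¬ has132 l) s q t := rfl
  rw [hgoal, h]
  refine Finset.sum_congr (by rw [hsdef]) ?_
  intro k hk
  rw [Finset.mem_range] at hk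
  rw [F132_card, card_topSet (by omega)]
  by_cases hke : k = n - 1
  · rw [if_pos hke, if_pos hke]
  · rw [if_neg hke, if_neg hke, F132_card,
      Finset.card_sdiff_of_subset (topSet_subset e k), card_topSet (by omega), hecard]

lemma f231_rec (n : ℕ) (hn : 0 < n) (q t : ℚ) :
    f231 n q t = ∑ k ∈ Finset.range n, f231 k q t *
      (if k = n - 1 then 1 else q ^ (k+1) * t * f231 (n-1-k) q (q ^ (k+1) * t)) := by
  set s := Finset.range n with hsdef
  have hs : s.Nonempty := by
    rw [hsdef, Finset.nonempty_range_iff]; omega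
  have hscard : s.card = n := Finset.card_range n
  set M := s.max' hs
  set e := s.erase M with he
  have hecard : e.card = n - 1 := by
    rw [he, Finset.card_erase_of_mem (s.max'_mem hs), hscard]
  have h := master (fun l => ¬ has231 l) not_has231_nil s hs
    (fun k => e \ topSet e (e.card - k))
    (fun k hk => Finset.sdiff_subset)
    (fun k hk => by
      rw [Finset.card_sdiff_of_subset (topSet_subset _ _), card_topSet (by omega)]
      omega)
    (hP231 s hs) q t
  rw [hscard] at h
  simp only [show s.erase (s.max' hs) = e from rfl] at h
  have hgoal : f231 n q t = F (fun l => ¬ has231 l) s q t := rfl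
  rw [hgoal, h]
  refine Finset.sum_congr (by rw [hsdef]) ?_
  intro k hk
  rw [Finset.mem_range] at hk
  rw [F231_card, Finset.card_sdiff_of_subset (topSet_subset _ _), card_topSet (by omega), hecard]
  have hself : e \ (e \ topSet e (n - 1 - k)) = topSet e (n - 1 - k) :=
    Finset.sdiff_sdiff_eq_self (topSet_subset _ _)
  have hk' : n - 1 - (n - 1 - k) = k := by omega
  rw [hk']
  by_cases hke : k = n - 1
  · rw [if_pos hke, if_pos hke]
  · rw [if_neg hke, if_neg hke, hself, F231_card, card_topSet (by omega)]

lemma f132_zero (q t : ℚ) : f132 0 q t = 1 := by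
  rw [f132, F, Finset.range_zero, permsOf_empty, Finset.filter_singleton,
    if_pos not_has132_nil, Finset.sum_singleton, wt_nil]

lemma f231_zero (q t : ℚ) : f231 0 q t = 1 := by
  rw [f231, F, Finset.range_zero, permsOf_empty, Finset.filter_singleton,
    if_pos not_has231_nil, Finset.sum_singleton, wt_nil]

lemma f132_eq_f231 : ∀ n : ℕ, ∀ q t : ℚ, f132 n q t = f231 n q t := by
  intro n
  induction n using Nat.strong_induction_on with
  | _ n ih =>
    intro q t
    rcases Nat.eq_zero_or_pos n with rfl | hn
    · rw [f132_zero, f231_zero]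
    · rw [f132_rec n hn q t, f231_rec n hn q t]
      refine Finset.sum_congr rfl ?_
      intro k hk
      rw [Finset.mem_range] at hk
      rw [ih k hk]
      by_cases hke : k = n - 1
      · rw [if_pos hke, if_pos hke]
      · rw [if_neg hke, if_neg hke, ih (n-1-k) (by omega)]

/-! ### transfer to Equiv.Perm -/

def word {n : ℕ} (σ : Equiv.Perm (Fin n)) : List ℕ := List.ofFn (fun i => (σ i : ℕ))

lemma word_length {n : ℕ} (σ : Equiv.Perm (Fin n)) : (word σ).length = n := by
  simp [word]

lemma word_getD {n : ℕ} (σ : Equiv.Perm (Fin n)) {i : ℕ} (h : i < n) :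
    (word σ).getD i 0 = (σ ⟨i, h⟩ : ℕ) := by
  rw [word, List.getD_eq_getElem _ 0 (by simp [h]), List.getElem_ofFn]

lemma word_mem_permsOf {n : ℕ} (σ : Equiv.Perm (Fin n)) :
    word σ ∈ permsOf (Finset.range n) := by
  rw [mem_permsOf']
  constructor
  · exact List.nodup_ofFn.2 (Fin.val_injective.comp σ.injective)
  · intro x
    rw [word, List.mem_ofFn, Finset.mem_range]
    constructor
    · rintro ⟨i, rfl⟩; exact (σ i).isLt
    · intro hx; exact ⟨σ.symm ⟨x, hx⟩, by simp⟩

lemma majAux_eq_sum (l : List ℕ) : ∀ i : ℕ,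
    majAux i l = ∑ j ∈ Finset.range (l.length - 1),
      if l.getD (j+1) 0 < l.getD j 0 then (i + j + 1) else 0 := by
  induction l with
  | nil => intro i; simp [majAux]
  | cons x t ih =>
    intro i
    cases t with
    | nil => simp [majAux]
    | cons y r =>
      rw [majAux, ih (i+1)]
      have hl : (x :: y :: r).length - 1 = r.length + 1 := by simp
      rw [hl, Finset.sum_range_succ' _ r.length]
      have hl2 : (y :: r).length - 1 = r.length := by simp
      rw [hl2]
      simp only [List.getD_cons_succ, List.getD_cons_zero]
      rw [Nat.add_comm]
      congr 1
      refine Finset.sum_congr rfl ?_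
      intro j _
      have : i + 1 + j + 1 = i + (j + 1) + 1 := by omega
      rw [this]

lemma majIdx_eq {n : ℕ} (σ : Equiv.Perm (Fin n)) : majIdx σ = majL (word σ) := by
  rw [majIdx, desSet, Finset.sum_filter, Finset.sum_Ico_eq_sum_range,
    majL, majAux_eq_sum (word σ) 0, word_length]
  refine Finset.sum_congr rfl ?_
  intro j hj
  rw [Finset.mem_range] at hj
  have hjn : 1 + j < n := by omega
  have hjn' : j + 1 < n := by omega
  have hj0 : j < n := by omega
  rw [word_getD σ hjn', word_getD σ hj0]
  have hcond : (∀ h : 1 + j < n,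
      σ ⟨1 + j, h⟩ < σ ⟨1 + j - 1, Nat.lt_of_le_of_lt (Nat.sub_le (1+j) 1) h⟩) ↔
      ((σ ⟨j + 1, hjn'⟩ : ℕ) < (σ ⟨j, hj0⟩ : ℕ)) := by
    have hfin1 : (⟨1 + j, hjn⟩ : Fin n) = ⟨j + 1, hjn'⟩ := by
      apply Fin.ext; simp; omega
    have hfin2 : (⟨1 + j - 1, Nat.lt_of_le_of_lt (Nat.sub_le (1+j) 1) hjn⟩ : Fin n)
        = ⟨j, hj0⟩ := by
      apply Fin.ext; simp
    constructor
    · intro h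
      have := h hjn
      rw [hfin1, hfin2, Fin.lt_def] at this
      exact this
    · intro h hh
      rw [hfin1, hfin2, Fin.lt_def]
      exact h
  rw [if_congr hcond (by omega : 1 + j = 0 + j + 1) rfl]

/-- the selector function -/
def pick {n : ℕ} (fi fj fk : Fin n) : Fin 3 → Fin n :=
  fun a => if a = 0 then fi else if a = 1 then fj else fk

lemma pick0 {n : ℕ} (fi fj fk : Fin n) : pick fi fj fk 0 = fi := if_pos rfl

lemma pick1 {n : ℕ} (fi fj fk : Fin n) : pick fi fj fk 1 = fj := by
  rw [pick, if_neg (by decide), if_pos rfl]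

lemma pick2 {n : ℕ} (fi fj fk : Fin n) : pick fi fj fk 2 = fk := by
  rw [pick, if_neg (by decide), if_neg (by decide)]

lemma fin3_cases (a : Fin 3) : a = 0 ∨ a = 1 ∨ a = 2 := by
  revert a; decide

lemma pick_strictMono {n : ℕ} {fi fj fk : Fin n} (h1 : fi < fj) (h2 : fj < fk) :
    StrictMono (pick fi fj fk) := by
  intro a b hab
  rcases fin3_cases a with rfl | rfl | rfl <;> rcases fin3_cases b with rfl | rfl | rfl <;>
    first
      | exact absurd hab (by decide)
      | (rw [pick0, pick1]; exact h1)
      | (rw [pick0, pick2]; exact h1.trans h2)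
      | (rw [pick1, pick2]; exact h2)

lemma contains_of_key {n : ℕ} (σ : Equiv.Perm (Fin n)) (π : Equiv.Perm (Fin 3))
    {fi fj fk : Fin n} (h1 : fi < fj) (h2 : fj < fk)
    (key : ∀ u v : Fin 3, π u < π v → σ (pick fi fj fk u) < σ (pick fi fj fk v)) :
    permContains σ π := by
  refine ⟨pick fi fj fk, pick_strictMono h1 h2, fun u v => ⟨key u v, fun hσ => ?_⟩⟩
  rcases lt_trichotomy (π u) (π v) with h | h | h
  · exact h
  · exfalso
    have huv : u = v := π.injective h
    subst huv
    exact absurd hσ (lt_irrefl _)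
  · exact absurd hσ (asymm (key v u h))

lemma contains132_iff {n : ℕ} (σ : Equiv.Perm (Fin n)) :
    permContains σ p132 ↔ has132 (word σ) := by
  constructor
  · rintro ⟨f, hf, hord⟩
    have h02 : σ (f 0) < σ (f 2) := (hord 0 2).1 (by decide)
    have h21 : σ (f 2) < σ (f 1) := (hord 2 1).1 (by decide)
    refine ⟨(f 0 : ℕ), (f 1 : ℕ), (f 2 : ℕ), hf (by decide), hf (by decide),
      by rw [word_length]; exact (f 2).isLt, ?_, ?_⟩
    · rw [word_getD σ (f 0).isLt, word_getD σ (f 2).isLt]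
      simp only [Fin.eta]
      exact h02
    · rw [word_getD σ (f 2).isLt, word_getD σ (f 1).isLt]
      simp only [Fin.eta]
      exact h21
  · rintro ⟨i, j, k, hij, hjk, hk, h1, h2⟩
    rw [word_length] at hk
    have hi : i < n := by omega
    have hj : j < n := by omega
    rw [word_getD σ hi, word_getD σ hk] at h1
    rw [word_getD σ hk, word_getD σ hj] at h2
    refine contains_of_key σ p132 (fi := ⟨i, hi⟩) (fj := ⟨j, hj⟩) (fk := ⟨k, hk⟩)
      (by rw [Fin.lt_def]; exact hij) (by rw [Fin.lt_def]; exact hjk) ?_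
    intro u v huv
    rcases fin3_cases u with rfl | rfl | rfl <;> rcases fin3_cases v with rfl | rfl | rfl <;>
      first
        | exact absurd huv (by decide)
        | (rw [pick0, pick2]; rw [Fin.lt_def]; exact h1)
        | (rw [pick0, pick1]; rw [Fin.lt_def]; exact h1.trans h2)
        | (rw [pick2, pick1]; rw [Fin.lt_def]; exact h2)

lemma contains231_iff {n : ℕ} (σ : Equiv.Perm (Fin n)) :
    permContains σ p231 ↔ has231 (word σ) := by
  constructor
  · rintro ⟨f, hf, hord⟩
    have h20 : σ (f 2) < σ (f 0) := (hord 2 0).1 (by decide)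
    have h01 : σ (f 0) < σ (f 1) := (hord 0 1).1 (by decide)
    refine ⟨(f 0 : ℕ), (f 1 : ℕ), (f 2 : ℕ), hf (by decide), hf (by decide),
      by rw [word_length]; exact (f 2).isLt, ?_, ?_⟩
    · rw [word_getD σ (f 2).isLt, word_getD σ (f 0).isLt]
      simp only [Fin.eta]
      exact h20
    · rw [word_getD σ (f 0).isLt, word_getD σ (f 1).isLt]
      simp only [Fin.eta]
      exact h01
  · rintro ⟨i, j, k, hij, hjk, hk, h1, h2⟩
    rw [word_length] at hk
    have hi : i < n := by omega
    have hj : j < n := by omega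
    rw [word_getD σ hk, word_getD σ hi] at h1
    rw [word_getD σ hi, word_getD σ hj] at h2
    refine contains_of_key σ p231 (fi := ⟨i, hi⟩) (fj := ⟨j, hj⟩) (fk := ⟨k, hk⟩)
      (by rw [Fin.lt_def]; exact hij) (by rw [Fin.lt_def]; exact hjk) ?_
    intro u v huv
    rcases fin3_cases u with rfl | rfl | rfl <;> rcases fin3_cases v with rfl | rfl | rfl <;>
      first
        | exact absurd huv (by decide)
        | (rw [pick2, pick0]; rw [Fin.lt_def]; exact h1)
        | (rw [pick0, pick1]; rw [Fin.lt_def]; exact h2)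
        | (rw [pick2, pick1]; rw [Fin.lt_def]; exact h1.trans h2)

/-- transfer the permutation sum to the list sum -/
lemma perm_sum_eq (n : ℕ) (q : ℚ) (P : List ℕ → Prop) (Q : Equiv.Perm (Fin n) → Prop)
    (hPQ : ∀ σ : Equiv.Perm (Fin n), Q σ ↔ P (word σ)) :
    ∑ σ ∈ Finset.univ.filter (fun σ : Equiv.Perm (Fin n) => Q σ), q ^ majIdx σ
      = F P (Finset.range n) q 1 := by
  classical
  rw [F]
  refine Finset.sum_bij (i := fun σ _ => word σ) ?_ ?_ ?_ ?_
  · intro σ hσ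
    rw [Finset.mem_filter] at hσ ⊢
    exact ⟨word_mem_permsOf σ, (hPQ σ).1 hσ.2⟩
  · intro σ1 h1 σ2 h2 heq
    have : (fun i => (σ1 i : ℕ)) = (fun i => (σ2 i : ℕ)) := List.ofFn_injective heq
    ext x
    have := congrFun this x
    exact this
  · intro l hl
    rw [Finset.mem_filter] at hl
    obtain ⟨hlp, hlP⟩ := hl
    obtain ⟨hnd, hmem⟩ := mem_permsOf'.1 hlp
    have hlen : l.length = n := by
      rw [length_of_mem_permsOf hlp, Finset.card_range]
    have hbound : ∀ i : Fin n, l.getD i.val 0 < n := by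
      intro i
      have : l.getD i.val 0 ∈ l := mem_of_getD (by omega)
      exact Finset.mem_range.1 ((hmem _).1 this)
    set g : Fin n → Fin n := fun i => ⟨l.getD i.val 0, hbound i⟩ with hg
    have hginj : Function.Injective g := by
      intro i j hij
      rw [hg] at hij
      simp only [Fin.mk.injEq] at hij
      rw [List.getD_eq_getElem l 0 (show (i : ℕ) < l.length by omega),
        List.getD_eq_getElem l 0 (show (j : ℕ) < l.length by omega)] at hij
      have := (List.Nodup.getElem_inj_iff hnd).1 hij
      exact Fin.ext this
    refine ⟨Equiv.ofBijective g (Finite.injective_iff_bijective.1 hginj), ?_, ?_⟩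
    · rw [Finset.mem_filter]
      refine ⟨Finset.mem_univ _, (hPQ _).2 ?_⟩
      have hw : word (Equiv.ofBijective g (Finite.injective_iff_bijective.1 hginj)) = l := by
        refine List.ext_getElem (by rw [word_length, hlen]) ?_
        intro i hi1 hi2
        simp only [word, List.getElem_ofFn]
        show l.getD i 0 = l[i]
        rw [List.getD_eq_getElem l 0 (by omega)]
      rw [hw]
      exact hlP
    · refine List.ext_getElem (by rw [word_length, hlen]) ?_
      intro i hi1 hi2
      simp only [word, List.getElem_ofFn]
      show l.getD i 0 = l[i]
      rw [List.getD_eq_getElem l 0 (by omega)]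
  · intro σ hσ
    rw [wt, majIdx_eq σ, one_pow, mul_one]
end MajW

/-- 132 and 231 are maj-Wilf equivalent. -/
theorem maj_132_eq_231 (n : ℕ) (q : ℚ) :
    ∑ σ ∈ Finset.univ.filter (fun σ : Equiv.Perm (Fin n) => permAvoids σ p132), q ^ majIdx σ
      = ∑ σ ∈ Finset.univ.filter (fun σ : Equiv.Perm (Fin n) => permAvoids σ p231),
          q ^ majIdx σ := by
  rw [MajW.perm_sum_eq n q (fun l => ¬ MajW.has132 l) (fun σ => permAvoids σ p132)
      (fun σ => not_congr (MajW.contains132_iff σ)),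
    MajW.perm_sum_eq n q (fun l => ¬ MajW.has231 l) (fun σ => permAvoids σ p231)
      (fun σ => not_congr (MajW.contains231_iff σ))]
  exact MajW.f132_eq_f231 n q 1
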